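/- Uniqueness part of quantitative Radon's theorem: For any d ≥ 1 and d+2 points in ℝ^d in general position, if I₁ ⊔ J₁ and I₂ ⊔ J₂ are both partitions of the index set such that the corresponding convex hulls intersect, then {I₁, J₁} = {I₂, J₂} (the partitions coincide up to swapping the two parts). -/
import Mathlib

open Finset

/-- Any affine dependence vanishing at one index is zero, by general position. -/
lemma radon_auxA {d : ℕ} {p : Fin (d + 2) → (Fin d → ℝ)}
    (hgen : ∀ s : Finset (Fin (d + 2)), s.card = d + 1 →
      AffineIndependent ℝ (fun i : s => p i))
    (c : Fin (d + 2) → ℝ) (hs : ∑ i, c i = 0) (hp : ∑ i, c i • p i = 0)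
    (i₀ : Fin (d + 2)) (h0 : c i₀ = 0) : c = 0 := by
  set s : Finset (Fin (d + 2)) := Finset.univ.erase i₀ with hsdef
  have hcard : s.card = d + 1 := by
    simp [hsdef, Finset.card_erase_of_mem, Finset.card_univ]
  have hai := hgen s hcard
  have hsum : ∑ i ∈ s, c i = 0 := by
    rw [Finset.sum_erase _ h0]; exact hs
  have hsump : ∑ i ∈ s, c i • p i = 0 := by
    rw [Finset.sum_erase _ (by rw [h0]; simp)]; exact hp
  have hz := affineIndependent_iff.mp hai Finset.univ (fun i => c ↑i)
    (by rw [Finset.univ_eq_attach, Finset.sum_attach s c]; exact hsum)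
    (by rw [Finset.univ_eq_attach, Finset.sum_attach s (fun i => c i • p i)]; exact hsump)
  funext i
  by_cases hi : i = i₀
  · rw [hi, h0]; rfl
  · exact hz ⟨i, by simp [hsdef, hi]⟩ (Finset.mem_univ _)

/-- Extract global weights from convex hull membership on an image. -/
lemma radon_auxB {d : ℕ} {p : Fin (d + 2) → (Fin d → ℝ)}
    (I : Set (Fin (d + 2))) (x : Fin d → ℝ)
    (hx : x ∈ convexHull ℝ (p '' I)) :
    ∃ a : Fin (d + 2) → ℝ, (∀ i, 0 ≤ a i) ∧ (∀ i, i ∉ I → a i = 0) ∧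
      ∑ i, a i = 1 ∧ ∑ i, a i • p i = x := by
  rw [Set.image_eq_range, convexHull_range_eq_exists_affineCombination] at hx
  obtain ⟨s, w, hw0, hw1, hwx⟩ := hx
  rw [Finset.affineCombination_eq_linear_combination _ _ _ hw1] at hwx
  classical
  refine ⟨fun i => ∑ j ∈ s, if (j : Fin (d + 2)) = i then w j else 0, ?_, ?_, ?_, ?_⟩
  · intro i
    exact Finset.sum_nonneg fun j hj => by
      by_cases h : (j : Fin (d + 2)) = i <;> simp [h, hw0 j hj]
  · intro i hi
    refine Finset.sum_eq_zero fun j _ => ?_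
    have : (j : Fin (d + 2)) ≠ i := fun h => hi (h ▸ j.2)
    simp [this]
  · rw [Finset.sum_comm]
    rw [← hw1]
    refine Finset.sum_congr rfl fun j _ => ?_
    simp
  · rw [show (∑ i, (∑ j ∈ s, if (j : Fin (d + 2)) = i then w j else 0) • p i)
        = ∑ i, ∑ j ∈ s, (if (j : Fin (d + 2)) = i then w j • p i else 0) by
      refine Finset.sum_congr rfl fun i _ => ?_
      rw [Finset.sum_smul]
      exact Finset.sum_congr rfl fun j _ => by
        by_cases h : (j : Fin (d + 2)) = i <;> simp [h]]
    rw [Finset.sum_comm, ← hwx]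
    refine Finset.sum_congr rfl fun j _ => ?_
    simp

/-- A Radon partition produces a nonzero affine dependence whose sign pattern is the
partition. -/
lemma radon_auxE {d : ℕ} {p : Fin (d + 2) → (Fin d → ℝ)}
    (hgen : ∀ s : Finset (Fin (d + 2)), s.card = d + 1 →
      AffineIndependent ℝ (fun i : s => p i))
    (I J : Set (Fin (d + 2)))
    (hdisj : I ∩ J = ∅) (hunion : I ∪ J = Set.univ)
    (hmeet : (convexHull ℝ (p '' I) ∩ convexHull ℝ (p '' J)).Nonempty) :
    ∃ c : Fin (d + 2) → ℝ, (∑ i, c i = 0) ∧ (∑ i, c i • p i = 0) ∧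
      I = {i | 0 < c i} ∧ J = {i | c i < 0} := by
  obtain ⟨x, hxI, hxJ⟩ := hmeet
  obtain ⟨a, ha0, haI, ha1, hax⟩ := radon_auxB I x hxI
  obtain ⟨b, hb0, hbJ, hb1, hbx⟩ := radon_auxB J x hxJ
  refine ⟨a - b, ?_, ?_, ?_, ?_⟩
  case _ => simp [Finset.sum_sub_distrib, ha1, hb1]
  case _ => simp [sub_smul, Finset.sum_sub_distrib, hax, hbx]
  all_goals {
    have hne : a - b ≠ 0 := by
      intro h
      have hab : ∀ i, a i = b i := fun i => sub_eq_zero.mp (congrFun h i)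
      have haz : ∀ i, a i = 0 := by
        intro i
        by_cases hiI : i ∈ I
        · have hiJ : i ∉ J := fun hiJ => by
            have : i ∈ I ∩ J := ⟨hiI, hiJ⟩
            rw [hdisj] at this; exact this
          rw [hab i, hbJ i hiJ]
        · exact haI i hiI
      rw [Finset.sum_congr rfl fun i _ => haz i] at ha1
      simp at ha1
    have hnz : ∀ i, a i - b i ≠ 0 := by
      intro i hi
      exact hne (radon_auxA hgen (a - b)
        (by simp [Finset.sum_sub_distrib, ha1, hb1])
        (by simp [sub_smul, Finset.sum_sub_distrib, hax, hbx]) i hi)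
    have hmem : ∀ i, i ∈ I ∨ i ∈ J := fun i => by
      have : i ∈ I ∪ J := hunion ▸ Set.mem_univ i
      exact this
    have hIJ : ∀ i, i ∈ I → i ∉ J := fun i hiI hiJ => by
      have : i ∈ I ∩ J := ⟨hiI, hiJ⟩
      rw [hdisj] at this; exact this
    first
    | -- I = positive part
      ext i
      simp only [Set.mem_setOf_eq, Pi.sub_apply]
      constructor
      · intro hiI
        have h1 : b i = 0 := hbJ i (hIJ i hiI)
        have := hnz i
        simp only [Pi.sub_apply, h1, sub_zero] at this ⊢
        exact lt_of_le_of_ne (ha0 i) (Ne.symm this)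
      · intro hpos
        rcases hmem i with h | h
        · exact h
        · exfalso
          have h1 : a i = 0 := haI i fun hiI => hIJ i hiI h
          rw [h1] at hpos
          simp only [zero_sub, neg_pos] at hpos
          exact absurd hpos (not_lt.mpr (hb0 i))
    | -- J = negative part
      ext i
      simp only [Set.mem_setOf_eq, Pi.sub_apply]
      constructor
      · intro hiJ
        have h1 : a i = 0 := haI i fun hiI => hIJ i hiI hiJ
        have := hnz i
        simp only [Pi.sub_apply, h1, zero_sub, ne_eq, neg_eq_zero] at this ⊢
        have : 0 < b i := lt_of_le_of_ne (hb0 i) (Ne.symm this)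
        linarith
      · intro hneg
        rcases hmem i with h | h
        · exfalso
          have h1 : b i = 0 := hbJ i (hIJ i h)
          rw [h1, sub_zero] at hneg
          exact absurd hneg (not_lt.mpr (ha0 i))
        · exact h }

theorem quantitative_radon_uniqueness (d : ℕ) (hd : 1 ≤ d)
    (p : Fin (d + 2) → (Fin d → ℝ))
    (hgen : ∀ s : Finset (Fin (d + 2)), s.card = d + 1 →
      AffineIndependent ℝ (fun i : s => p i))
    (I₁ J₁ I₂ J₂ : Set (Fin (d + 2)))
    (h₁disj : I₁ ∩ J₁ = ∅) (h₁union : I₁ ∪ J₁ = Set.univ)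
    (h₁meet : (convexHull ℝ (p '' I₁) ∩ convexHull ℝ (p '' J₁)).Nonempty)
    (h₂disj : I₂ ∩ J₂ = ∅) (h₂union : I₂ ∪ J₂ = Set.univ)
    (h₂meet : (convexHull ℝ (p '' I₂) ∩ convexHull ℝ (p '' J₂)).Nonempty) :
    ({I₁, J₁} : Set (Set (Fin (d + 2)))) = {I₂, J₂} := by
  obtain ⟨c₁, hc₁s, hc₁p, hI₁, hJ₁⟩ := radon_auxE hgen I₁ J₁ h₁disj h₁union h₁meet
  obtain ⟨c₂, hc₂s, hc₂p, hI₂, hJ₂⟩ := radon_auxE hgen I₂ J₂ h₂disj h₂union h₂meet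
  -- all coordinates of c₁, c₂ nonzero
  have hne₁ : ∀ i, c₁ i ≠ 0 := by
    intro i hi
    have hiI : i ∉ I₁ := by rw [hI₁]; simp [hi]
    have hiJ : i ∉ J₁ := by rw [hJ₁]; simp [hi]
    have : i ∈ I₁ ∪ J₁ := h₁union ▸ Set.mem_univ i
    rcases this with h | h <;> [exact hiI h; exact hiJ h]
  have hne₂ : ∀ i, c₂ i ≠ 0 := by
    intro i hi
    have hiI : i ∉ I₂ := by rw [hI₂]; simp [hi]
    have hiJ : i ∉ J₂ := by rw [hJ₂]; simp [hi]
    have : i ∈ I₂ ∪ J₂ := h₂union ▸ Set.mem_univ i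
    rcases this with h | h <;> [exact hiI h; exact hiJ h]
  -- proportionality
  set l : ℝ := c₁ 0 / c₂ 0 with hl
  have hprop : c₁ = fun i => l * c₂ i := by
    have h0 : c₁ 0 - l * c₂ 0 = 0 := by
      rw [hl, div_mul_cancel₀ _ (hne₂ 0), sub_self]
    have := radon_auxA hgen (fun i => c₁ i - l * c₂ i)
      (by rw [Finset.sum_sub_distrib, ← Finset.mul_sum, hc₁s, hc₂s]; ring)
      (by
        rw [show (∑ i, (c₁ i - l * c₂ i) • p i)
            = (∑ i, c₁ i • p i) - l • (∑ i, c₂ i • p i) by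
          rw [Finset.smul_sum, ← Finset.sum_sub_distrib]
          exact Finset.sum_congr rfl fun i _ => by
            rw [sub_smul, smul_smul]]
        rw [hc₁p, hc₂p]; simp)
      0 h0
    funext i
    have := congrFun this i
    simpa [sub_eq_zero] using this
  have hl0 : l ≠ 0 := by
    intro h
    exact hne₁ 0 (by rw [congrFun hprop 0, h, zero_mul])
  rcases lt_or_gt_of_ne hl0 with hlneg | hlpos
  · -- swap
    have e1 : I₁ = J₂ := by
      rw [hI₁, hJ₂]
      ext i
      simp only [Set.mem_setOf_eq, congrFun hprop i]
      constructor
      · intro h; nlinarith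
      · intro h; nlinarith
    have e2 : J₁ = I₂ := by
      rw [hJ₁, hI₂]
      ext i
      simp only [Set.mem_setOf_eq, congrFun hprop i]
      constructor
      · intro h; nlinarith
      · intro h; nlinarith
    rw [e1, e2, Set.pair_comm]
  · have e1 : I₁ = I₂ := by
      rw [hI₁, hI₂]
      ext i
      simp only [Set.mem_setOf_eq, congrFun hprop i]
      constructor
      · intro h; nlinarith
      · intro h; nlinarith
    have e2 : J₁ = J₂ := by
      rw [hJ₁, hJ₂]
      ext i
      simp only [Set.mem_setOf_eq, congrFun hprop i]
      constructor
      · intro h; nlinarith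
      · intro h; nlinarith
    rw [e1, e2]
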